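/- Let F be a field and consider matrices A ∈ F^{m×m}, B_i ∈ F^{m×r_i}, C_i ∈ F^{q_i×m} for i = 0,…,w+1, with each K_i having distinct indeterminate entries, all ranks computed over the rational function field F(K). Then rank(A + Σ_{i=0}^{w+1} B_i K_i C_i) = min{ rank([A B_{w+1}] + Σ_{i=0}^{w} B_i K_i [C_i 0]), rank([A; C_{w+1}] + Σ_{i=0}^{w} [B_i; 0] K_i C_i) }, where [C_i 0] pads C_i with r_{w+1} zero columns and [B_i; 0] pads B_i with q_{w+1} zero rows. -/

import Mathlib

open Matrix

set_option linter.unusedSectionVars false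
set_option maxHeartbeats 1600000

section auxAll
variable {E : Type*} [Field E] {m n rr qq : Type*} [Fintype m] [Fintype n] [Fintype rr]
  [Fintype qq] [DecidableEq m] [DecidableEq n] [DecidableEq rr] [DecidableEq qq]

lemma aux_submatrix_le {k k' : Type*} [Fintype k] [Fintype k']
    (M : Matrix m n E) (f : k → m) (g : k' → n) :
    (M.submatrix f g).rank ≤ M.rank := by
  have h : M.submatrix f g =
      ((1 : Matrix m m E).submatrix f id) * M * ((1 : Matrix n n E).submatrix id g) := by
    ext i j
    simp [Matrix.mul_apply, Matrix.one_apply]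
  rw [h]
  exact le_trans (rank_mul_le_left _ _) (rank_mul_le_right _ _)

lemma aux_rank_eq_card_of_det_ne_zero (M : Matrix n n E) (h : M.det ≠ 0) :
    M.rank = Fintype.card n :=
  Matrix.rank_of_isUnit M (by simpa [Matrix.isUnit_iff_isUnit_det, isUnit_iff_ne_zero] using h)

lemma aux_det_ne_zero_of_rank_eq_card (M : Matrix n n E) (h : M.rank = Fintype.card n) :
    M.det ≠ 0 := by
  intro hd
  obtain ⟨v, hv, hMv⟩ := (Matrix.exists_mulVec_eq_zero_iff).2 hd
  have hker : v ∈ LinearMap.ker M.mulVecLin := by simpa using hMv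
  have h1 : 0 < Module.finrank E (LinearMap.ker M.mulVecLin) := by
    rw [Module.finrank_pos_iff]
    exact nontrivial_of_ne ⟨v, hker⟩ 0 (by simpa [Subtype.ext_iff] using hv)
  have h2 := LinearMap.finrank_range_add_finrank_ker (M.mulVecLin)
  rw [Module.finrank_pi] at h2
  have h3 : M.rank = Module.finrank E (LinearMap.range M.mulVecLin) := rfl
  omega

lemma aux_exists_cols (M : Matrix m n E) {k : ℕ} (hk : M.rank = k) :
    ∃ g : Fin k → n, (M.submatrix id g).rank = k := by
  classical
  obtain ⟨t, hts, hspan, hli⟩ := exists_linearIndependent E (Set.range Mᵀ)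
  have hft : t.Finite := Set.Finite.subset (Set.finite_range _) hts
  haveI : Fintype t := hft.fintype
  have hcard : t.toFinset.card = k := by
    rw [← finrank_span_set_eq_card hli, hspan, ← hk]
    exact (Matrix.rank_eq_finrank_span_cols M).symm
  have hcard' : Fintype.card t = k := by rw [← hcard, Set.toFinset_card]
  let e : Fin k ≃ t := (Fintype.equivFinOfCardEq hcard').symm
  have hsel : ∀ j : Fin k, ∃ i : n, Mᵀ i = (e j).1 := fun j => hts (e j).2
  choose g hg using hsel
  refine ⟨g, ?_⟩
  have hli2 : LinearIndependent E fun j : Fin k => ((M.submatrix id g)ᵀ j) := by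
    have : (fun j : Fin k => ((M.submatrix id g)ᵀ j)) = (fun v : t => v.1) ∘ e := by
      funext j
      ext i
      have := congrFun (hg j) i
      simpa [Matrix.submatrix, Matrix.transpose] using this
    rw [this]
    exact hli.comp e (e.injective)
  rw [← Matrix.rank_transpose]
  rw [LinearIndependent.rank_matrix (M := (M.submatrix id g)ᵀ) hli2, Fintype.card_fin]

lemma aux_exists_det (M : Matrix m n E) {k : ℕ} (hk : M.rank = k) :
    ∃ (f : Fin k → m) (g : Fin k → n), (M.submatrix f g).det ≠ 0 := by
  obtain ⟨g, hg⟩ := aux_exists_cols M hk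
  obtain ⟨f, hf⟩ := aux_exists_cols (M.submatrix id g)ᵀ (by rw [Matrix.rank_transpose, hg])
  refine ⟨f, g, aux_det_ne_zero_of_rank_eq_card _ ?_⟩
  have he : ((M.submatrix id g)ᵀ.submatrix id f) = (M.submatrix f g)ᵀ := by
    ext i j; rfl
  rw [← Matrix.rank_transpose, ← he, hf, Fintype.card_fin]

lemma aux_rank_map_le {S E₁ E₂ : Type*} [CommRing S] [Field E₁] [Field E₂]
    (Q : Matrix m n S) (f : S →+* E₁) (g : S →+* E₂) (hf : Function.Injective f) :
    (Q.map g).rank ≤ (Q.map f).rank := by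
  obtain ⟨a, b, hdet⟩ := aux_exists_det (Q.map g) rfl
  have h1g : ((Q.map g).submatrix a b) = (Q.submatrix a b).map g := rfl
  have h1f : ((Q.map f).submatrix a b) = (Q.submatrix a b).map f := rfl
  have hd : (Q.submatrix a b).det ≠ 0 := by
    intro h0
    rw [h1g, ← RingHom.mapMatrix_apply, ← RingHom.map_det, h0, map_zero] at hdet
    exact hdet rfl
  have hfd : ((Q.map f).submatrix a b).det ≠ 0 := by
    rw [h1f, ← RingHom.mapMatrix_apply, ← RingHom.map_det]
    intro h0
    exact hd (hf (by rw [h0, map_zero]))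
  calc (Q.map g).rank = Fintype.card (Fin ((Q.map g).rank)) := by simp
  _ = ((Q.map f).submatrix a b).rank := (aux_rank_eq_card_of_det_ne_zero _ hfd).symm
  _ ≤ (Q.map f).rank := aux_submatrix_le _ _ _

lemma aux_exists_ker_dot (M : Matrix m n E) (v : n → E)
    (hv : v ∉ LinearMap.range Mᵀ.mulVecLin) :
    ∃ z, M *ᵥ z = 0 ∧ v ⬝ᵥ z ≠ 0 := by
  classical
  by_contra hcon
  push_neg at hcon
  apply hv
  set κ := LinearMap.ker M.mulVecLin with hκ
  let b := Module.finBasis E κ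
  set d := Module.finrank E κ with hd
  let Z : Matrix n (Fin d) E := Matrix.of fun i j => (b j).1 i
  have hbker : ∀ j, M *ᵥ (b j).1 = 0 := fun j => (b j).2
  have hW_le_U : LinearMap.range Mᵀ.mulVecLin ≤ LinearMap.ker Zᵀ.mulVecLin := by
    rintro _ ⟨x, rfl⟩
    rw [LinearMap.mem_ker]
    ext j
    have hdot : (b j).1 ⬝ᵥ (Mᵀ *ᵥ x) = (M *ᵥ (b j).1) ⬝ᵥ x := by
      rw [Matrix.dotProduct_mulVec, Matrix.vecMul_transpose]
    simp only [mulVecLin_apply, Matrix.mulVec, Matrix.transpose_apply, Pi.zero_apply]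
    calc (fun i => Z i j) ⬝ᵥ (Mᵀ *ᵥ x) = (b j).1 ⬝ᵥ (Mᵀ *ᵥ x) := rfl
    _ = (M *ᵥ (b j).1) ⬝ᵥ x := hdot
    _ = 0 := by rw [hbker j, zero_dotProduct]
  have hv_mem_U : v ∈ LinearMap.ker Zᵀ.mulVecLin := by
    rw [LinearMap.mem_ker]
    ext j
    calc (Zᵀ.mulVecLin v) j = (b j).1 ⬝ᵥ v := rfl
    _ = v ⬝ᵥ (b j).1 := dotProduct_comm _ _
    _ = 0 := hcon _ (hbker j)
  have hZrank : Zᵀ.rank = d := by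
    have hli : LinearIndependent E fun j : Fin d => Zᵀ j := by
      have hfe : (fun j : Fin d => Zᵀ j) = (κ.subtype : κ →ₗ[E] (n → E)) ∘ b := by
        funext j; ext i; rfl
      rw [hfe]
      exact b.linearIndependent.map' κ.subtype (Submodule.ker_subtype κ)
    rw [LinearIndependent.rank_matrix (M := Zᵀ) hli, Fintype.card_fin]
  have h1 := LinearMap.finrank_range_add_finrank_ker (Zᵀ.mulVecLin)
  have h2 := LinearMap.finrank_range_add_finrank_ker (M.mulVecLin)
  rw [Module.finrank_pi] at h1 h2
  have h3 : Zᵀ.rank = Module.finrank E (LinearMap.range Zᵀ.mulVecLin) := rfl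
  have h4 : Mᵀ.rank = Module.finrank E (LinearMap.range Mᵀ.mulVecLin) := rfl
  have h5 : Mᵀ.rank = M.rank := Matrix.rank_transpose M
  have h6 : M.rank = Module.finrank E (LinearMap.range M.mulVecLin) := rfl
  have hdd : d = Module.finrank E (LinearMap.ker M.mulVecLin) := rfl
  have heq : LinearMap.range Mᵀ.mulVecLin = LinearMap.ker Zᵀ.mulVecLin :=
    Submodule.eq_of_le_of_finrank_le hW_le_U (by omega)
  rw [heq]
  exact hv_mem_U

lemma aux_outer_mulVec (u : m → E) (v : n → E) (w : n → E) :
    vecMulVec u v *ᵥ w = (v ⬝ᵥ w) • u := by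
  ext i
  simp [Matrix.mulVec, Matrix.vecMulVec_apply, dotProduct, Finset.mul_sum, mul_assoc,
    mul_comm, mul_left_comm]

lemma aux_rank_lt_add_vecMulVec (M : Matrix m n E) (u : m → E) (v : n → E)
    (hu : u ∉ LinearMap.range M.mulVecLin) (hv : v ∉ LinearMap.range Mᵀ.mulVecLin) :
    M.rank < (M + vecMulVec u v).rank := by
  obtain ⟨z, hz, hvz⟩ := aux_exists_ker_dot M v hv
  set N := M + vecMulVec u v with hN
  have key : ∀ w, N *ᵥ w = M *ᵥ w + (v ⬝ᵥ w) • u := by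
    intro w
    rw [hN, Matrix.add_mulVec, aux_outer_mulVec]
  have hrange : LinearMap.range M.mulVecLin ⊔ Submodule.span E {u} ≤
      LinearMap.range N.mulVecLin := by
    rw [sup_le_iff]
    constructor
    · rintro _ ⟨w, rfl⟩
      refine ⟨w - ((v ⬝ᵥ w) * (v ⬝ᵥ z)⁻¹) • z, ?_⟩
      rw [mulVecLin_apply, key, mulVecLin_apply]
      rw [Matrix.mulVec_sub, Matrix.mulVec_smul, hz, smul_zero, sub_zero]
      rw [dotProduct_sub, dotProduct_smul]
      rw [smul_eq_mul, mul_assoc, inv_mul_cancel₀ hvz, mul_one, sub_self, zero_smul, add_zero]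
    · rw [Submodule.span_le, Set.singleton_subset_iff]
      refine ⟨(v ⬝ᵥ z)⁻¹ • z, ?_⟩
      rw [mulVecLin_apply, key, Matrix.mulVec_smul, hz, smul_zero, zero_add,
        dotProduct_smul, smul_eq_mul, inv_mul_cancel₀ hvz, one_smul]
  have hlt : LinearMap.range M.mulVecLin < LinearMap.range M.mulVecLin ⊔ Submodule.span E {u} := by
    refine lt_of_le_of_ne le_sup_left (fun h => hu ?_)
    rw [h]
    exact Submodule.mem_sup_right (Submodule.mem_span_singleton_self u)
  calc M.rank = Module.finrank E (LinearMap.range M.mulVecLin) := rfl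
  _ < Module.finrank E ↥(LinearMap.range M.mulVecLin ⊔ Submodule.span E {u}) :=
      Submodule.finrank_lt_finrank_of_lt hlt
  _ ≤ Module.finrank E (LinearMap.range N.mulVecLin) := Submodule.finrank_mono hrange
  _ = N.rank := rfl

lemma aux_exists_col_escape (M : Matrix m n E) (B : Matrix m rr E)
    (h : M.rank < (fromCols M B).rank) : ∃ y, B *ᵥ y ∉ LinearMap.range M.mulVecLin := by
  by_contra hc
  push_neg at hc
  have hle : LinearMap.range (fromCols M B).mulVecLin ≤ LinearMap.range M.mulVecLin := by
    rintro _ ⟨x, rfl⟩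
    rw [mulVecLin_apply, ← Sum.elim_comp_inl_inr x, fromCols_mulVec_sumElim]
    exact add_mem (LinearMap.mem_range_self _ _) (hc _)
  have hmono := Submodule.finrank_mono hle
  have h1 : (fromCols M B).rank =
      Module.finrank E (LinearMap.range (fromCols M B).mulVecLin) := rfl
  have h2 : M.rank = Module.finrank E (LinearMap.range M.mulVecLin) := rfl
  omega

lemma aux_outer_conj (B : Matrix m rr E) (C : Matrix qq n E) (y : rr → E) (x : qq → E) :
    B * vecMulVec y x * C = vecMulVec (B *ᵥ y) (Cᵀ *ᵥ x) := by
  ext i j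
  simp only [Matrix.mul_apply, Matrix.vecMulVec_apply, Matrix.mulVec, dotProduct,
    Matrix.transpose_apply, Finset.sum_mul, Finset.mul_sum]
  exact Finset.sum_congr rfl fun b _ => Finset.sum_congr rfl fun a _ => by ring

lemma aux_rank_add_le (M : Matrix m n E) (B : Matrix m rr E) (C : Matrix qq n E)
    (K : Matrix rr qq E) :
    (M + B * K * C).rank ≤ min (fromCols M B).rank (fromRows M C).rank := by
  refine le_min ?_ ?_
  · have h : M + B * K * C = fromCols M B * fromRows (1 : Matrix n n E) (K * C) := by
      rw [fromCols_mul_fromRows, Matrix.mul_one, Matrix.mul_assoc]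
    rw [h]
    exact rank_mul_le_left _ _
  · have h : M + B * K * C = fromCols (1 : Matrix m m E) (B * K) * fromRows M C := by
      rw [fromCols_mul_fromRows, Matrix.one_mul]
    rw [h]
    exact rank_mul_le_right _ _

lemma aux_rank_fromColumns_add (M : Matrix m n E) (B : Matrix m rr E) (C : Matrix qq n E)
    (K : Matrix rr qq E) :
    (fromCols (M + B * K * C) B).rank = (fromCols M B).rank := by
  have h : fromCols (M + B * K * C) B =
      fromCols M B * fromBlocks (1 : Matrix n n E) 0 (K * C) (1 : Matrix rr rr E) := by
    rw [fromCols_mul_fromBlocks]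
    simp [Matrix.mul_assoc]
  rw [h]
  apply Matrix.rank_mul_eq_left_of_isUnit_det
  rw [Matrix.det_fromBlocks_zero₁₂, Matrix.det_one, Matrix.det_one, mul_one]
  exact isUnit_one

lemma aux_rank_fromRows_add (M : Matrix m n E) (B : Matrix m rr E) (C : Matrix qq n E)
    (K : Matrix rr qq E) :
    (fromRows (M + B * K * C) C).rank = (fromRows M C).rank := by
  rw [← Matrix.rank_transpose, transpose_fromRows, Matrix.transpose_add, Matrix.transpose_mul,
    Matrix.transpose_mul]
  rw [show Cᵀ * (Kᵀ * Bᵀ) = Cᵀ * Kᵀ * Bᵀ from (Matrix.mul_assoc _ _ _).symm]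
  rw [aux_rank_fromColumns_add Mᵀ Cᵀ Bᵀ Kᵀ, ← transpose_fromRows, Matrix.rank_transpose]

lemma aux_exists_K (M : Matrix m n E) (B : Matrix m rr E) (C : Matrix qq n E) :
    ∃ K : Matrix rr qq E,
      (M + B * K * C).rank = min (fromCols M B).rank (fromRows M C).rank := by
  suffices h : ∀ (t : ℕ) (K : Matrix rr qq E),
      min (fromCols M B).rank (fromRows M C).rank - (M + B * K * C).rank ≤ t →
      ∃ K' : Matrix rr qq E, min (fromCols M B).rank (fromRows M C).rank ≤ (M + B * K' * C).rank by
    obtain ⟨K', h'⟩ := h (min (fromCols M B).rank (fromRows M C).rank) 0 (Nat.sub_le _ _)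
    exact ⟨K', le_antisymm (aux_rank_add_le M B C K') h'⟩
  intro t
  induction t with
  | zero =>
    intro K hK
    exact ⟨K, by omega⟩
  | succ t ih =>
    intro K hK
    by_cases hle : min (fromCols M B).rank (fromRows M C).rank ≤ (M + B * K * C).rank
    · exact ⟨K, hle⟩
    · push_neg at hle
      set N := M + B * K * C with hNdef
      have hcol : N.rank < (fromCols N B).rank := by
        rw [hNdef, aux_rank_fromColumns_add]
        exact lt_of_lt_of_le hle (min_le_left _ _)
      have hrow : N.rank < (fromRows N C).rank := by
        rw [hNdef, aux_rank_fromRows_add]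
        exact lt_of_lt_of_le hle (min_le_right _ _)
      obtain ⟨y, hy⟩ := aux_exists_col_escape N B hcol
      have hrow' : Nᵀ.rank < (fromCols Nᵀ Cᵀ).rank := by
        rw [Matrix.rank_transpose, ← transpose_fromRows, Matrix.rank_transpose]
        exact hrow
      obtain ⟨x, hx⟩ := aux_exists_col_escape Nᵀ Cᵀ hrow'
      have step : N.rank < (N + vecMulVec (B *ᵥ y) (Cᵀ *ᵥ x)).rank :=
        aux_rank_lt_add_vecMulVec N (B *ᵥ y) (Cᵀ *ᵥ x) hy hx
      have hexp : M + B * (K + vecMulVec y x) * C = N + vecMulVec (B *ᵥ y) (Cᵀ *ᵥ x) := by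
        rw [hNdef, Matrix.mul_add, Matrix.add_mul, ← aux_outer_conj B C y x]
        abel
      refine ih (K + vecMulVec y x) ?_
      rw [hexp]
      omega

lemma aux_fromColumns_add {n₁ n₂ : Type*} (A₁ B₁ : Matrix m n₁ E) (A₂ B₂ : Matrix m n₂ E) :
    fromCols A₁ A₂ + fromCols B₁ B₂ = fromCols (A₁ + B₁) (A₂ + B₂) := by
  ext i (j | j) <;> simp

lemma aux_fromRows_add {m₁ m₂ : Type*} (A₁ B₁ : Matrix m₁ n E) (A₂ B₂ : Matrix m₂ n E) :
    fromRows A₁ A₂ + fromRows B₁ B₂ = fromRows (A₁ + B₁) (A₂ + B₂) := by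
  ext (i | i) j <;> simp

lemma aux_fromColumns_sum {n₁ n₂ ι' : Type*} (s : Finset ι')
    (f : ι' → Matrix m n₁ E) (g : ι' → Matrix m n₂ E) :
    ∑ i ∈ s, fromCols (f i) (g i) = fromCols (∑ i ∈ s, f i) (∑ i ∈ s, g i) := by
  ext i (j | j) <;> simp [Matrix.sum_apply]

lemma aux_fromRows_sum {m₁ m₂ ι' : Type*} (s : Finset ι')
    (f : ι' → Matrix m₁ n E) (g : ι' → Matrix m₂ n E) :
    ∑ i ∈ s, fromRows (f i) (g i) = fromRows (∑ i ∈ s, f i) (∑ i ∈ s, g i) := by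
  ext (i | i) j <;> simp [Matrix.sum_apply]

end auxAll

theorem stmt_15 {F : Type*} [Field F] {w m : ℕ} {r q : Fin (w + 2) → ℕ}
    (A : Matrix (Fin m) (Fin m) F)
    (B : ∀ i, Matrix (Fin m) (Fin (r i)) F)
    (C : ∀ i, Matrix (Fin (q i)) (Fin m) F) :
    (let R := FractionRing (MvPolynomial ((i : Fin (w + 2)) × (Fin (r i) × Fin (q i))) F)
     let ι : F →+* R :=
       (algebraMap (MvPolynomial ((i : Fin (w + 2)) × (Fin (r i) × Fin (q i))) F) R).comp
         MvPolynomial.C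
     let K : ∀ i, Matrix (Fin (r i)) (Fin (q i)) R := fun i =>
       Matrix.of fun a b =>
         algebraMap (MvPolynomial ((i : Fin (w + 2)) × (Fin (r i) × Fin (q i))) F) R
           (MvPolynomial.X ⟨i, (a, b)⟩)
     let last : Fin (w + 2) := Fin.last (w + 1)
     (A.map ⇑ι + ∑ i, (B i).map ⇑ι * K i * (C i).map ⇑ι).rank =
       min
         (fromCols (A.map ⇑ι) ((B last).map ⇑ι) +
             ∑ i : Fin (w + 1), (B i.castSucc).map ⇑ι * K i.castSucc *
               fromCols ((C i.castSucc).map ⇑ι)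
                 (0 : Matrix (Fin (q i.castSucc)) (Fin (r last)) R)).rank
         (fromRows (A.map ⇑ι) ((C last).map ⇑ι) +
             ∑ i : Fin (w + 1),
               fromRows ((B i.castSucc).map ⇑ι)
                 (0 : Matrix (Fin (q last)) (Fin (r i.castSucc)) R) *
                 K i.castSucc * (C i.castSucc).map ⇑ι).rank) := by
  intro R ι K last
  classical
  set S := MvPolynomial ((i : Fin (w + 2)) × (Fin (r i) × Fin (q i))) F with hS
  set f : S →+* R := algebraMap S R with hfdef
  -- the "fixed" part
  set A' : Matrix (Fin m) (Fin m) R :=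
    A.map ⇑ι + ∑ i : Fin (w + 1),
      (B i.castSucc).map ⇑ι * K i.castSucc * (C i.castSucc).map ⇑ι with hA'
  have hmain : A.map ⇑ι + ∑ i, (B i).map ⇑ι * K i * (C i).map ⇑ι
      = A' + (B last).map ⇑ι * K last * (C last).map ⇑ι := by
    rw [Fin.sum_univ_castSucc, hA', add_assoc]
  have haug1 : fromCols (A.map ⇑ι) ((B last).map ⇑ι) +
      ∑ i : Fin (w + 1), (B i.castSucc).map ⇑ι * K i.castSucc *
        fromCols ((C i.castSucc).map ⇑ι)
          (0 : Matrix (Fin (q i.castSucc)) (Fin (r last)) R)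
      = fromCols A' ((B last).map ⇑ι) := by
    have hterm : ∀ i : Fin (w + 1), (B i.castSucc).map ⇑ι * K i.castSucc *
        fromCols ((C i.castSucc).map ⇑ι)
          (0 : Matrix (Fin (q i.castSucc)) (Fin (r last)) R)
        = fromCols ((B i.castSucc).map ⇑ι * K i.castSucc * (C i.castSucc).map ⇑ι)
            (0 : Matrix (Fin m) (Fin (r last)) R) := by
      intro i
      rw [mul_fromCols, Matrix.mul_zero]
    rw [Finset.sum_congr rfl (fun i _ => hterm i), aux_fromColumns_sum, aux_fromColumns_add,
      Finset.sum_const_zero, add_zero, hA']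
  have haug2 : fromRows (A.map ⇑ι) ((C last).map ⇑ι) +
      ∑ i : Fin (w + 1),
        fromRows ((B i.castSucc).map ⇑ι)
          (0 : Matrix (Fin (q last)) (Fin (r i.castSucc)) R) *
          K i.castSucc * (C i.castSucc).map ⇑ι
      = fromRows A' ((C last).map ⇑ι) := by
    have hterm : ∀ i : Fin (w + 1),
        fromRows ((B i.castSucc).map ⇑ι)
          (0 : Matrix (Fin (q last)) (Fin (r i.castSucc)) R) *
          K i.castSucc * (C i.castSucc).map ⇑ι
        = fromRows ((B i.castSucc).map ⇑ι * K i.castSucc * (C i.castSucc).map ⇑ι)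
            (0 : Matrix (Fin (q last)) (Fin m) R) := by
      intro i
      rw [fromRows_mul, fromRows_mul, Matrix.zero_mul, Matrix.zero_mul]
    rw [Finset.sum_congr rfl (fun i _ => hterm i), aux_fromRows_sum, aux_fromRows_add,
      Finset.sum_const_zero, add_zero, hA']
  rw [hmain, haug1, haug2]
  refine le_antisymm (aux_rank_add_le _ _ _ _) ?_
  obtain ⟨K₀, hK₀⟩ := aux_exists_K A' ((B last).map ⇑ι) ((C last).map ⇑ι)
  -- specialization argument
  set XM : ∀ i, Matrix (Fin (r i)) (Fin (q i)) S :=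
    fun i => Matrix.of fun a b => MvPolynomial.X ⟨i, (a, b)⟩ with hXM
  set P : Matrix (Fin m) (Fin m) S :=
    A.map MvPolynomial.C + ∑ i, ((B i).map MvPolynomial.C : Matrix (Fin m) (Fin (r i)) S) * XM i *
      ((C i).map MvPolynomial.C : Matrix (Fin (q i)) (Fin m) S)
    with hP
  set v : ((i : Fin (w + 2)) × (Fin (r i) × Fin (q i))) → R := fun s =>
    if h : s.1 = last then K₀ (Fin.cast (by rw [h]) s.2.1) (Fin.cast (by rw [h]) s.2.2)
    else f (MvPolynomial.X s) with hv
  set g : S →+* R := MvPolynomial.eval₂Hom ι v with hg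
  have hPmap : ∀ (h : S →+* R), (∀ c, h (MvPolynomial.C c) = ι c) →
      P.map ⇑h = A.map ⇑ι + ∑ i, (B i).map ⇑ι * (XM i).map ⇑h * (C i).map ⇑ι := by
    intro h hc
    ext a b
    simp [hP, Matrix.map_apply, Matrix.add_apply, Matrix.sum_apply, Matrix.mul_apply,
      map_sum, _root_.map_mul, hc]
  have hfC : ∀ c, f (MvPolynomial.C c) = ι c := fun c => rfl
  have hgC : ∀ c, g (MvPolynomial.C c) = ι c := fun c => by
    rw [hg]; exact MvPolynomial.eval₂Hom_C _ _ _
  have hXf : ∀ i, (XM i).map ⇑f = K i := fun i => rfl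
  have hXg_cast : ∀ i : Fin (w + 1), (XM i.castSucc).map ⇑g = K i.castSucc := by
    intro i
    ext a b
    have hne : (i.castSucc : Fin (w + 2)) ≠ last := (Fin.castSucc_lt_last i).ne
    simp only [hXM, Matrix.map_apply, Matrix.of_apply, hg]
    rw [MvPolynomial.eval₂Hom_X']
    rw [hv]
    simp only [dif_neg hne]
    rfl
  have hXg_last : (XM last).map ⇑g = K₀ := by
    ext a b
    simp only [hXM, Matrix.map_apply, Matrix.of_apply, hg]
    rw [MvPolynomial.eval₂Hom_X']
    show v ⟨last, (a, b)⟩ = K₀ a b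
    rw [hv]
    exact dif_pos rfl
  have hPf : P.map ⇑f = A' + (B last).map ⇑ι * K last * (C last).map ⇑ι := by
    rw [hPmap f hfC]
    simp only [hXf]
    rw [← hmain, hmain]
  have hPg : P.map ⇑g = A' + (B last).map ⇑ι * K₀ * (C last).map ⇑ι := by
    rw [hPmap g hgC, Fin.sum_univ_castSucc]
    simp only [hXg_cast, hXg_last]
    rw [show (XM (Fin.last (w + 1))).map ⇑g = K₀ from hXg_last]
    rw [hA', add_assoc]
  have hfinj : Function.Injective ⇑f := IsFractionRing.injective S R
  calc min (fromCols A' ((B last).map ⇑ι)).rank (fromRows A' ((C last).map ⇑ι)).rank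
      = (A' + (B last).map ⇑ι * K₀ * (C last).map ⇑ι).rank := hK₀.symm
  _ = (P.map ⇑g).rank := by rw [hPg]
  _ ≤ (P.map ⇑f).rank := aux_rank_map_le P f g hfinj
  _ = (A' + (B last).map ⇑ι * K last * (C last).map ⇑ι).rank := by rw [hPf]
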